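/- Let d_1, …, d_k ≥ 0 be distances, let ρ ≥ 0, and suppose at least one d_j > ρ. Define f : (0,∞) → ℝ by f(σ) = ∑_{j=1}^k exp(−max(0, d_j − ρ)/σ), and let m = #{j : d_j ≤ ρ}. Then f is continuous and strictly monotonically increasing on (0,∞), f(σ) → m as σ → 0⁺, and f(σ) → k as σ → ∞. Consequently, for every target value t with m < t < k, there exists a unique σ > 0 with f(σ) = t. -/

import Mathlib

open Filter

/-- given distances `d_1,…,d_k ≥ 0`, `ρ ≥ 0` with some `d_j > ρ`,
the function `f(σ) = ∑_j exp(−max(0, d_j − ρ)/σ)` is continuous and strictly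
increasing on `(0,∞)`, tends to `m = #{j : d_j ≤ ρ}` as `σ → 0⁺` and to `k` as
`σ → ∞`; hence for every `t` with `m < t < k` there is a unique `σ > 0` with
`f(σ) = t`.  This is the existence/uniqueness of UMAP's bandwidth `σ_i`. -/
theorem umap_bandwidth_exists_unique {k : ℕ} (dist : Fin k → ℝ)
    (hdist : ∀ j, 0 ≤ dist j) (ρ : ℝ) (hρ : 0 ≤ ρ) (hex : ∃ j, ρ < dist j) :
    let f : ℝ → ℝ := fun σ => ∑ j, Real.exp (-max 0 (dist j - ρ) / σ)
    let m : ℕ := (Finset.univ.filter fun j => dist j ≤ ρ).card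
    ContinuousOn f (Set.Ioi 0) ∧
    StrictMonoOn f (Set.Ioi 0) ∧
    Tendsto f (nhdsWithin 0 (Set.Ioi 0)) (nhds (m : ℝ)) ∧
    Tendsto f atTop (nhds (k : ℝ)) ∧
    ∀ t : ℝ, (m : ℝ) < t → t < (k : ℝ) → ∃! σ : ℝ, 0 < σ ∧ f σ = t := by
  intro f m
  -- continuity
  have hcont : ContinuousOn f (Set.Ioi 0) := by
    apply continuousOn_finset_sum
    intro j _
    exact Real.continuous_exp.comp_continuousOn
      ((continuousOn_const.div continuousOn_id fun x hx => ne_of_gt hx))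
  -- strict monotonicity
  have hmono : StrictMonoOn f (Set.Ioi 0) := by
    intro a ha b hb hab
    have ha' : (0:ℝ) < a := ha
    have hb' : (0:ℝ) < b := hb
    apply Finset.sum_lt_sum
    · intro j _
      apply Real.exp_le_exp.2
      rw [neg_div, neg_div, neg_le_neg_iff]
      exact div_le_div_of_nonneg_left (le_max_left _ _) ha' hab.le
    · obtain ⟨j, hj⟩ := hex
      refine ⟨j, Finset.mem_univ _, ?_⟩
      apply Real.exp_lt_exp.2
      rw [neg_div, neg_div, neg_lt_neg_iff]
      have hc : 0 < max 0 (dist j - ρ) := lt_max_of_lt_right (by linarith)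
      exact div_lt_div_of_pos_left hc ha' hab
  -- limit at 0+
  have h0 : Tendsto f (nhdsWithin 0 (Set.Ioi 0)) (nhds (m : ℝ)) := by
    have hm : (m : ℝ) = ∑ j : Fin k, if dist j ≤ ρ then (1:ℝ) else 0 := by
      rw [Finset.sum_boole]
    rw [hm]
    apply tendsto_finset_sum
    intro j _
    by_cases hj : dist j ≤ ρ
    · have : max 0 (dist j - ρ) = 0 := max_eq_left (by linarith)
      simp [this, hj]
    · have hc : 0 < dist j - ρ := by linarith [lt_of_not_ge hj]
      have hmax : max 0 (dist j - ρ) = dist j - ρ := max_eq_right hc.le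
      simp only [hj, if_false, hmax]
      have h1 : Tendsto (fun σ : ℝ => (dist j - ρ) / σ) (nhdsWithin 0 (Set.Ioi 0)) atTop := by
        simpa [div_eq_mul_inv] using tendsto_inv_nhdsGT_zero.const_mul_atTop hc
      have h2 : Tendsto (fun σ : ℝ => -(dist j - ρ) / σ) (nhdsWithin 0 (Set.Ioi 0)) atBot := by
        simpa only [Function.comp_def, neg_div] using tendsto_neg_atTop_atBot.comp h1
      exact Real.tendsto_exp_atBot.comp h2
  -- limit at ∞
  have hinf : Tendsto f atTop (nhds (k : ℝ)) := by
    have hk : (k : ℝ) = ∑ _j : Fin k, (1:ℝ) := by simp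
    rw [hk]
    apply tendsto_finset_sum
    intro j _
    have h1 : Tendsto (fun σ : ℝ => -max 0 (dist j - ρ) / σ) atTop (nhds 0) :=
      tendsto_const_nhds.div_atTop tendsto_id
    have := (Real.continuous_exp.continuousAt (x := (0:ℝ))).tendsto.comp h1
    simpa [Function.comp_def] using this
  refine ⟨hcont, hmono, h0, hinf, ?_⟩
  intro t hmt htk
  obtain ⟨σ₀, hσ₀lt, hσ₀pos⟩ := ((h0.eventually_lt_const hmt).and self_mem_nhdsWithin).exists
  obtain ⟨σ₁, hσ₁gt, hσ₁pos⟩ := ((hinf.eventually_const_lt htk).and (eventually_gt_atTop 0)).exists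
  have hord : σ₀ < σ₁ := by
    by_contra h
    push_neg at h
    have := hmono.monotoneOn (Set.mem_Ioi.2 hσ₁pos) hσ₀pos h
    linarith
  have hsub : Set.Icc σ₀ σ₁ ⊆ Set.Ioi 0 := fun x hx => lt_of_lt_of_le hσ₀pos hx.1
  obtain ⟨σ, hσmem, hσeq⟩ := intermediate_value_Icc hord.le (hcont.mono hsub) ⟨hσ₀lt.le, hσ₁gt.le⟩
  refine ⟨σ, ⟨lt_of_lt_of_le hσ₀pos hσmem.1, hσeq⟩, ?_⟩
  rintro σ' ⟨hσ'pos, hσ'eq⟩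
  exact hmono.injOn (Set.mem_Ioi.2 hσ'pos) (hsub hσmem) (by rw [hσ'eq, hσeq])
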